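/- arXiv:1210.4050 — 4 statements merged into one kernel-verified Lean document; each statement's English description precedes it below -/
import Mathlib

section
/- Let H be a Hilbert space, X a self-adjoint finite-rank operator on H with trace zero, and Q an operator with 0 ≤ Q ≤ 1. Then |Tr(QX)| ≤ (1/2)·rank(X)·‖X‖. -/
/-- Let `H` be a complex Hilbert space, `X` a self-adjoint finite-rank
operator on `H` with trace zero, and `Q` an operator with `0 ≤ Q ≤ 1`.  Then
`|Tr(QX)| ≤ (1/2) · rank(X) · ‖X‖`.  Traces are expressed with respect to a Hilbert basis
`b` of `H` as (assumed convergent) sums `∑ᵢ ⟪b i, T (b i)⟫`. -/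
theorem trace_QX_bound
    {H : Type*} [NormedAddCommGroup H] [InnerProductSpace ℂ H] [CompleteSpace H]
    {ι : Type*} (b : HilbertBasis ι ℂ H)
    (X : H →L[ℂ] H) (hXsa : IsSelfAdjoint X)
    (hXfr : FiniteDimensional ℂ (LinearMap.range (X : H →ₗ[ℂ] H)))
    (hXtr : HasSum (fun i => (inner ℂ (b i) (X (b i)) : ℂ)) 0)
    (Q : H →L[ℂ] H) (hQ0 : Q.IsPositive) (hQ1 : (1 - Q).IsPositive)
    (T : ℂ) (hT : HasSum (fun i => (inner ℂ (b i) ((Q ∘L X) (b i)) : ℂ)) T) :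
    ‖T‖ ≤ (1 / 2 : ℝ) * (Module.finrank ℂ (LinearMap.range (X : H →ₗ[ℂ] H)) : ℝ) * ‖X‖ := by
  classical
  set V : Submodule ℂ H := LinearMap.range (X : H →ₗ[ℂ] H) with hV
  set n : ℕ := Module.finrank ℂ V with hn
  -- symmetry of X
  have hXsym : ∀ x y : H, (inner ℂ (X x) y : ℂ) = inner ℂ x (X y) :=
    fun x y => ContinuousLinearMap.isSelfAdjoint_iff_isSymmetric.mp hXsa x y
  -- restrict X to V
  have hmap : ∀ x ∈ V, X x ∈ V := fun x _ => LinearMap.mem_range_self (X : H →ₗ[ℂ] H) x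
  let X' : V →ₗ[ℂ] V := (X : H →ₗ[ℂ] H).restrict hmap
  have hX'apply : ∀ v : V, ((X' v : V) : H) = X (v : H) := fun v => rfl
  have hX'sym : X'.IsSymmetric := by
    intro u v
    rw [Submodule.coe_inner, Submodule.coe_inner, hX'apply, hX'apply]
    exact hXsym u v
  -- eigen decomposition
  have hnV : Module.finrank ℂ V = n := rfl
  let e : OrthonormalBasis (Fin n) ℂ V := hX'sym.eigenvectorBasis hnV
  let lam : Fin n → ℝ := hX'sym.eigenvalues hnV
  have heig : ∀ k, X ((e k : V) : H) = (lam k : ℂ) • ((e k : V) : H) := by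
    intro k
    have h : X' (e k) = (lam k : ℂ) • e k := hX'sym.apply_eigenvectorBasis hnV k
    calc X ((e k : V) : H) = ((X' (e k) : V) : H) := (hX'apply (e k)).symm
    _ = (((lam k : ℂ) • e k : V) : H) := by rw [h]
    _ = (lam k : ℂ) • ((e k : V) : H) := rfl
  have henorm : ∀ k, ‖((e k : V) : H)‖ = 1 := by
    intro k
    have := e.orthonormal.1 k
    rwa [Submodule.norm_coe]
  -- the key expansion of X z in terms of eigenvectors
  have hXz : ∀ z : H, X z = ∑ k : Fin n, ((lam k : ℂ) * inner ℂ ((e k : V) : H) z) • ((e k : V) : H) := by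
    intro z
    have hz : X z ∈ V := LinearMap.mem_range_self _ z
    have := e.sum_repr' ⟨X z, hz⟩
    have h2 : (((∑ k : Fin n, (inner ℂ (e k) (⟨X z, hz⟩ : V) : ℂ) • e k : V)) : H) = X z := by
      rw [this]
    rw [← h2]
    push_cast [Submodule.coe_sum]
    refine Finset.sum_congr rfl fun k _ => ?_
    have hin : (inner ℂ (e k) (⟨X z, hz⟩ : V) : ℂ) = inner ℂ ((e k : V) : H) (X z) := by
      rw [Submodule.coe_inner]
    rw [hin]
    congr 1
    rw [← hXsym, heig, inner_smul_left, Complex.conj_ofReal]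
  -- the trace identity for a general operator R
  have key : ∀ (R : H →L[ℂ] H) (S : ℂ),
      HasSum (fun i => (inner ℂ (b i) (R (X (b i))) : ℂ)) S →
      S = ∑ k : Fin n, (lam k : ℂ) * inner ℂ ((e k : V) : H) (R ((e k : V) : H)) := by
    intro R S hS
    have h1 : ∀ i : ι, (inner ℂ (b i) (R (X (b i))) : ℂ) =
        ∑ k : Fin n, (lam k : ℂ) * ((inner ℂ ((e k : V) : H) (b i) : ℂ) * inner ℂ (b i) (R ((e k : V) : H))) := by
      intro i
      rw [hXz (b i), map_sum]
      rw [inner_sum]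
      refine Finset.sum_congr rfl fun k _ => ?_
      rw [map_smul, inner_smul_right]
      ring
    have h2 : HasSum (fun i => ∑ k : Fin n,
        (lam k : ℂ) * ((inner ℂ ((e k : V) : H) (b i) : ℂ) * inner ℂ (b i) (R ((e k : V) : H))))
        (∑ k : Fin n, (lam k : ℂ) * inner ℂ ((e k : V) : H) (R ((e k : V) : H))) := by
      refine hasSum_sum fun k _ => ?_
      exact (b.hasSum_inner_mul_inner ((e k : V) : H) (R ((e k : V) : H))).mul_left _
    exact hS.unique (by simpa only [← h1] using h2)
  -- apply with R = Q and R = 1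
  have hTval : T = ∑ k : Fin n, (lam k : ℂ) * inner ℂ ((e k : V) : H) (Q ((e k : V) : H)) := by
    refine key Q T ?_
    simpa using hT
  have htr0 : (0 : ℂ) = ∑ k : Fin n, (lam k : ℂ) * inner ℂ ((e k : V) : H) ((e k : V) : H) := by
    have := key 1 0 (by simpa using hXtr)
    simpa using this
  have hsum0 : ∑ k : Fin n, lam k = 0 := by
    have : (0 : ℂ) = ∑ k : Fin n, (lam k : ℂ) := by
      rw [htr0]
      refine Finset.sum_congr rfl fun k _ => ?_
      rw [inner_self_eq_norm_sq_to_K, henorm]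
      norm_num
    have h2 : ((∑ k : Fin n, lam k : ℝ) : ℂ) = 0 := by push_cast; rw [← this]
    exact_mod_cast h2
  -- q k values
  set q : Fin n → ℝ := fun k => (Complex.re (inner ℂ ((e k : V) : H) (Q ((e k : V) : H)) : ℂ)) with hq
  have hqreal : ∀ k, (inner ℂ ((e k : V) : H) (Q ((e k : V) : H)) : ℂ) = (q k : ℂ) := by
    intro k
    have hsym : ∀ x y : H, (inner ℂ (Q x) y : ℂ) = inner ℂ x (Q y) :=
      fun x y => hQ0.1 x y
    have : (starRingEnd ℂ) (inner ℂ ((e k : V) : H) (Q ((e k : V) : H)) : ℂ)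
        = inner ℂ ((e k : V) : H) (Q ((e k : V) : H)) := by
      rw [inner_conj_symm, hsym]
    exact (Complex.conj_eq_iff_re.mp this).symm
  have hq0 : ∀ k, 0 ≤ q k := fun k => (Complex.nonneg_iff.mp (hQ0.inner_nonneg_right _)).1
  have hq1 : ∀ k, q k ≤ 1 := by
    intro k
    have h := hQ1.inner_nonneg_right ((e k : V) : H)
    have h2 : (inner ℂ ((e k : V) : H) (((1 : H →L[ℂ] H) - Q) ((e k : V) : H)) : ℂ)
        = (1 : ℂ) - (q k : ℂ) := by
      rw [ContinuousLinearMap.sub_apply, inner_sub_right, hqreal,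
        ContinuousLinearMap.one_apply, inner_self_eq_norm_sq_to_K, henorm]
      norm_num
    rw [h2] at h
    have h := (Complex.nonneg_iff.mp h).1
    simp only [Complex.sub_re, Complex.one_re, Complex.ofReal_re] at h
    linarith
  -- eigenvalue bound
  have hlam : ∀ k, |lam k| ≤ ‖X‖ := by
    intro k
    have h1 : ‖X ((e k : V) : H)‖ ≤ ‖X‖ * ‖((e k : V) : H)‖ := X.le_opNorm _
    rw [heig, norm_smul, henorm] at h1
    simpa [Complex.norm_real] using h1
  -- final computation
  have hTreal : T = ((∑ k : Fin n, lam k * q k : ℝ) : ℂ) := by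
    rw [hTval]
    push_cast
    refine Finset.sum_congr rfl fun k _ => ?_
    rw [hqreal]
  rw [hTreal]
  rw [Complex.norm_real, Real.norm_eq_abs]
  have hmid : ∑ k : Fin n, lam k * q k = ∑ k : Fin n, lam k * (q k - 1/2) := by
    rw [Finset.sum_congr rfl (fun k _ => by ring : ∀ k ∈ Finset.univ, lam k * (q k - 1/2) = lam k * q k - lam k * (1/2)), Finset.sum_sub_distrib, ← Finset.sum_mul, hsum0]
    ring
  rw [hmid]
  calc |∑ k : Fin n, lam k * (q k - 1/2)| ≤ ∑ k : Fin n, |lam k * (q k - 1/2)| :=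
        Finset.abs_sum_le_sum_abs _ _
    _ ≤ ∑ k : Fin n, ‖X‖ * (1/2) := by
        refine Finset.sum_le_sum fun k _ => ?_
        rw [abs_mul]
        have h1 : |q k - 1/2| ≤ 1/2 := by
          rw [abs_le]; constructor <;> [linarith [hq0 k]; linarith [hq1 k]]
        exact mul_le_mul (hlam k) h1 (abs_nonneg _) (norm_nonneg _)
    _ = (1/2 : ℝ) * (n : ℝ) * ‖X‖ := by
        rw [Finset.sum_const, Finset.card_univ, Fintype.card_fin]
        ring
end

section
/- Let Γ be a group with a paradoxical decomposition: pairwise disjoint subsets X₁,…,Xₙ,Y₁,…,Y_m of Γ and elements g₁,…,gₙ,h₁,…,h_m with g₁ = h₁ = e such that Γ = ⊔ᵢ gᵢXᵢ = ⊔ⱼ hⱼYⱼ = (⊔ᵢ Xᵢ) ⊔ (⊔ⱼ Yⱼ). Then for every nonzero finite-rank projection P on ℓ²(Γ) there exists x ∈ {g₁,…,gₙ,h₁,…,h_m} with ‖[λ_x, P]‖ ≥ 1/(n+m−2). -/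
open scoped ENNReal Pointwise

theorem memℓp_comp_equiv {α β : Type*} (e : α ≃ β) (f : α → ℂ) (hf : Memℓp f 2) :
    Memℓp (fun b => f (e.symm b)) 2 := by
  rw [memℓp_gen_iff (by norm_num : 0 < (2:ℝ≥0∞).toReal)] at hf ⊢
  exact (e.symm.summable_iff (f := fun a => ‖f a‖ ^ (2:ℝ≥0∞).toReal)).2 hf

/-- Reindexing of `ℓ²` along an equivalence of index sets, as a linear isometric
equivalence: `f ↦ f ∘ e.symm`. -/
noncomputable def lpCongr {α β : Type*} (e : α ≃ β) :
    lp (fun _ : α => ℂ) 2 ≃ₗᵢ[ℂ] lp (fun _ : β => ℂ) 2 where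
  toLinearEquiv :=
    { toFun := fun f => ⟨fun b => f (e.symm b), memℓp_comp_equiv e f (lp.memℓp f)⟩
      invFun := fun g => ⟨fun a => g (e a), by
        show Memℓp _ _
        simpa using memℓp_comp_equiv e.symm (g : β → ℂ) (lp.memℓp g)⟩
      map_add' := by intro f g; ext b; rfl
      map_smul' := by intro c f; ext b; rfl
      left_inv := by intro f; ext a; simp
      right_inv := by intro g; ext b; simp }
  norm_map' := by
    intro f
    have h2 : 0 < (2:ℝ≥0∞).toReal := by norm_num
    rw [lp.norm_eq_tsum_rpow h2, lp.norm_eq_tsum_rpow h2]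
    congr 1
    exact e.symm.tsum_eq (f := fun a => ‖f a‖ ^ (2:ℝ≥0∞).toReal)

variable {Γ : Type*} [Group Γ]

/-- The left regular representation of a group `Γ` on `ℓ²(Γ)`:
`lam x` maps `δ_t` to `δ_{x t}`, i.e. `(lam x f) s = f (x⁻¹ * s)`. -/
noncomputable def lam (x : Γ) :
    lp (fun _ : Γ => ℂ) 2 ≃ₗᵢ[ℂ] lp (fun _ : Γ => ℂ) 2 :=
  lpCongr (Equiv.mulLeft x)

/-- The left regular representation, as a continuous linear map on `ℓ²(Γ)`. -/
noncomputable def lamCLM (x : Γ) :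
    lp (fun _ : Γ => ℂ) 2 →L[ℂ] lp (fun _ : Γ => ℂ) 2 :=
  ((lam x).toContinuousLinearEquiv : lp (fun _ : Γ => ℂ) 2 ≃L[ℂ] lp (fun _ : Γ => ℂ) 2)


/-! ### Auxiliary machinery for the quantitative Rosenberg theorem -/

open scoped ComplexConjugate

local notation "⟪" x ", " y "⟫" => @inner ℂ _ _ x y

section AuxGeneric
variable {ι : Type*}
local notation "ℋ" => lp (fun _ : ι => ℂ) 2

lemma qr_summable_coord_sq (v : ℋ) : Summable (fun t : ι => ‖v t‖^2) := by
  have h := lp.memℓp v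
  rw [memℓp_gen_iff (by norm_num : 0 < (2:ℝ≥0∞).toReal)] at h
  have h3 : ∀ t : ι, ‖v t‖ ^ (2:ℝ≥0∞).toReal = ‖v t‖ ^ 2 := by
    intro t
    rw [show (2:ℝ≥0∞).toReal = ((2:ℕ):ℝ) by norm_num, Real.rpow_natCast]
  simpa [h3] using h

lemma qr_tsum_coord_sq (v : ℋ) : ∑' t : ι, ‖v t‖^2 = ‖v‖^2 := by
  have h2 : 0 < (2:ℝ≥0∞).toReal := by norm_num
  have h := (lp.norm_rpow_eq_tsum h2 v).symm
  have h3 : ∀ t : ι, ‖v t‖ ^ (2:ℝ≥0∞).toReal = ‖v t‖ ^ 2 := by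
    intro t; rw [show (2:ℝ≥0∞).toReal = ((2:ℕ):ℝ) by norm_num, Real.rpow_natCast]
  rw [show ((2:ℝ≥0∞).toReal) = ((2:ℕ):ℝ) by norm_num, Real.rpow_natCast] at h
  simpa [h3] using h

lemma qr_inner_single_left [DecidableEq ι] (t : ι) (w : ℋ) :
    (inner ℂ (lp.single 2 t (1:ℂ)) w : ℂ) = w t := by
  rw [lp.inner_single_left]; simp

lemma qr_delta_inner_sum [DecidableEq ι] (t : ι) {s : ℕ} (v : Fin s → ℋ) (c : Fin s → ℝ) :
    (⟪lp.single 2 t (1:ℂ), ∑ k, ((c k : ℂ) * ⟪v k, lp.single 2 t (1:ℂ)⟫) • v k⟫ : ℂ)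
      = ((∑ k, c k * ‖v k t‖^2 : ℝ) : ℂ) := by
  rw [inner_sum]
  push_cast
  refine Finset.sum_congr rfl fun k _ => ?_
  rw [inner_smul_right, qr_inner_single_left t (v k), lp.inner_single_right]
  simp only [RCLike.inner_apply, map_one, mul_one]
  rw [one_mul, mul_assoc, RCLike.conj_mul]
  norm_num

/-- The "dimension function" of an `r`-tuple of vectors in `ℓ²(ι)`, evaluated on a set. -/
noncomputable def ddx {r : ℕ} (u : Fin r → ℋ) (S : Set ι) : ℝ :=
  ∑ k, ∑' t : S, ‖u k t‖^2

lemma qr_tsum_sq_le_one (v : ℋ) (hv : ‖v‖ = 1) (S : Set ι) : ∑' t : S, ‖v t‖^2 ≤ 1 := by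
  have hs := qr_summable_coord_sq v
  calc ∑' t : S, ‖v t‖^2 ≤ ∑' t : ι, ‖v t‖^2 := by
        refine Summable.tsum_le_tsum_of_inj (Subtype.val) Subtype.val_injective
          (fun c _ => sq_nonneg _) (fun i => le_refl _) (hs.subtype S) hs
    _ = 1 := by rw [qr_tsum_coord_sq v, hv]; norm_num

lemma ddx_union {r : ℕ} (u : Fin r → ℋ) {S T : Set ι} (hd : Disjoint S T) :
    ddx u (S ∪ T) = ddx u S + ddx u T := by
  unfold ddx
  rw [← Finset.sum_add_distrib]
  refine Finset.sum_congr rfl fun k _ => ?_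
  exact Summable.tsum_union_disjoint hd ((qr_summable_coord_sq (u k)).subtype S)
    ((qr_summable_coord_sq (u k)).subtype T)

lemma ddx_iUnion {r N : ℕ} (u : Fin r → ℋ) (S : Fin N → Set ι)
    (hd : Pairwise (Function.onFun Disjoint S)) :
    ddx u (⋃ i, S i) = ∑ i, ddx u (S i) := by
  unfold ddx
  rw [Finset.sum_comm]
  refine Finset.sum_congr rfl fun k _ => ?_
  have he : (⋃ i, S i) = ⋃ i ∈ (Finset.univ : Finset (Fin N)), S i := by simp
  rw [he]
  exact Summable.tsum_finset_bUnion_disjoint (fun i _ j _ hij => hd hij)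
    (fun i _ => (qr_summable_coord_sq (u k)).subtype (S i))

lemma ddx_univ {r : ℕ} (u : Fin r → ℋ) (hu : Orthonormal ℂ u) :
    ddx u Set.univ = r := by
  unfold ddx
  have h1 : ∀ k : Fin r, ∑' t : (Set.univ : Set ι), ‖u k t‖^2 = 1 := by
    intro k
    rw [tsum_univ (fun t => ‖u k t‖^2), qr_tsum_coord_sq (u k), hu.1 k]
    norm_num
  simp only [h1, Finset.sum_const, Finset.card_univ, Fintype.card_fin, nsmul_eq_mul, mul_one]

end AuxGeneric

lemma qr_counting_lemma {E : Type*} [NormedAddCommGroup E] [InnerProductSpace ℂ E] {N r : ℕ}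
    (μ : Fin N → ℝ) (u : Fin N → E) (hu : Orthonormal ℂ u) (e f : Fin r → E)
    (hsum : ∀ w, (∑ i, ((μ i : ℂ) * ⟪u i, w⟫) • u i)
      = (∑ k, (⟪e k, w⟫ : ℂ) • e k) - (∑ k, (⟪f k, w⟫ : ℂ) • f k)) :
    (Finset.univ.filter (fun i => 0 < μ i)).card ≤ r := by
  classical
  set pos := Finset.univ.filter (fun i : Fin N => 0 < μ i) with hposdef
  let T : (↥pos → ℂ) →ₗ[ℂ] (Fin r → ℂ) :=
    { toFun := fun a k => ⟪e k, ∑ i : ↥pos, a i • u i.1⟫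
      map_add' := by
        intro a b; funext k
        simp [add_smul, Finset.sum_add_distrib, inner_add_right]
      map_smul' := by
        intro z a; funext k
        simp [inner_sum, inner_smul_right, Finset.mul_sum, mul_assoc] }
  have hTinj : Function.Injective T := by
    rw [injective_iff_map_eq_zero]
    intro a ha
    have ha' : ∀ k, (⟪e k, ∑ i : ↥pos, a i • u i.1⟫ : ℂ) = 0 := fun k => congrFun ha k
    set w := ∑ i : ↥pos, a i • u i.1 with hwdef
    have hone : ∀ (i : Fin N) (j : ↥pos), (⟪u i, u j.1⟫ : ℂ) = if i = j.1 then 1 else 0 :=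
      fun i j => orthonormal_iff_ite.mp hu i j.1
    have hGval : ∀ i : Fin N, (⟪u i, w⟫ : ℂ) = if h : i ∈ pos then a ⟨i, h⟩ else 0 := by
      intro i
      simp only [hwdef, inner_sum, inner_smul_right]
      by_cases h : i ∈ pos
      · rw [dif_pos h, Finset.sum_eq_single (⟨i, h⟩ : ↥pos)]
        · rw [hone i ⟨i, h⟩, if_pos rfl, mul_one]
        · intro j _ hj
          rw [hone i j, if_neg, mul_zero]
          exact fun hij => hj (Subtype.ext hij.symm)
        · exact fun habs => absurd (Finset.mem_univ _) habs
      · rw [dif_neg h]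
        refine Finset.sum_eq_zero fun j _ => ?_
        rw [hone i j, if_neg, mul_zero]
        exact fun hij => h (hij ▸ j.2)
    have hkey := congrArg (fun z => (⟪w, z⟫ : ℂ)) (hsum w)
    simp only [inner_sub_right, inner_sum, inner_smul_right] at hkey
    have hA0 : (∑ k, (⟪e k, w⟫ : ℂ) * ⟪w, e k⟫) = 0 := by
      refine Finset.sum_eq_zero fun k _ => ?_
      rw [ha' k, zero_mul]
    have hlhs : (∑ i, ((μ i : ℂ) * ⟪u i, w⟫) * ⟪w, u i⟫)
        = ((∑ i, μ i * ‖(⟪u i, w⟫ : ℂ)‖^2 : ℝ) : ℂ) := by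
      push_cast
      refine Finset.sum_congr rfl fun i _ => ?_
      rw [← inner_conj_symm w (u i), mul_assoc, RCLike.mul_conj]
      norm_num
    have hrhs : (∑ k, (⟪f k, w⟫ : ℂ) * ⟪w, f k⟫)
        = ((∑ k, ‖(⟪f k, w⟫ : ℂ)‖^2 : ℝ) : ℂ) := by
      push_cast
      refine Finset.sum_congr rfl fun k _ => ?_
      rw [← inner_conj_symm w (f k), RCLike.mul_conj]
      norm_num
    rw [hlhs, hA0, hrhs, zero_sub] at hkey
    have hreal : (∑ i, μ i * ‖(⟪u i, w⟫ : ℂ)‖^2) = -(∑ k, ‖(⟪f k, w⟫ : ℂ)‖^2) := by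
      exact_mod_cast hkey
    have hterm_nonneg : ∀ i ∈ Finset.univ, 0 ≤ μ i * ‖(⟪u i, w⟫ : ℂ)‖^2 := by
      intro i _
      by_cases hi : i ∈ pos
      · have : 0 < μ i := (Finset.mem_filter.mp hi).2
        positivity
      · rw [hGval i, dif_neg hi]
        simp
    have hsum0 : (∑ i, μ i * ‖(⟪u i, w⟫ : ℂ)‖^2) = 0 := by
      have h1 : (0:ℝ) ≤ ∑ i, μ i * ‖(⟪u i, w⟫ : ℂ)‖^2 := Finset.sum_nonneg hterm_nonneg
      have h2 : (0:ℝ) ≤ ∑ k, ‖(⟪f k, w⟫ : ℂ)‖^2 := Finset.sum_nonneg fun k _ => sq_nonneg _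
      linarith
    have hzero := (Finset.sum_eq_zero_iff_of_nonneg hterm_nonneg).mp hsum0
    funext j
    have hj := hzero j.1 (Finset.mem_univ _)
    have hμj : 0 < μ j.1 := (Finset.mem_filter.mp j.2).2
    have hGj : (⟪u j.1, w⟫ : ℂ) = 0 := by
      by_contra hne
      have h3 : 0 < ‖(⟪u j.1, w⟫ : ℂ)‖^2 := pow_pos (norm_pos_iff.mpr hne) 2
      nlinarith
    have h4 := hGval j.1
    rw [dif_pos j.2, hGj] at h4
    simpa using h4.symm
  have hle := LinearMap.finrank_le_finrank_of_injective hTinj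
  rw [Module.finrank_pi, Module.finrank_pi] at hle
  simpa [Fintype.card_coe] using hle

lemma qr_finite_rank_symmetric_diag {E : Type*} [NormedAddCommGroup E] [InnerProductSpace ℂ E]
    (Q : E →L[ℂ] E) (V : Submodule ℂ E) [FiniteDimensional ℂ V]
    (hmem : ∀ v, Q v ∈ V) (hsym : ∀ v w, ⟪Q v, w⟫ = ⟪v, Q w⟫) :
    ∃ (μ : Fin (Module.finrank ℂ V) → ℝ) (u : Fin (Module.finrank ℂ V) → E),
      Orthonormal ℂ u ∧ (∀ i, Q (u i) = (μ i : ℂ) • u i) ∧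
      ∀ v, Q v = ∑ i, ((μ i : ℂ) * ⟪u i, v⟫) • u i := by
  have hperp : ∀ v ∈ Vᗮ, Q v = 0 := by
    intro v hv
    have h1 : ⟪Q v, Q v⟫ = 0 := by
      rw [hsym]
      exact (Submodule.mem_orthogonal' V v).mp hv _ (hmem _)
    simpa using inner_self_eq_zero.mp h1
  set Q' : V →ₗ[ℂ] V :=
    ((Q : E →ₗ[ℂ] E).domRestrict V).codRestrict V (fun v => hmem v) with hQ'
  have hsymQ' : Q'.IsSymmetric := by
    intro x y
    exact hsym x y
  set N := Module.finrank ℂ V with hN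
  set μ := hsymQ'.eigenvalues (rfl : Module.finrank ℂ V = N) with hμ
  set b := hsymQ'.eigenvectorBasis (rfl : Module.finrank ℂ V = N) with hb
  refine ⟨μ, fun i => (b i : E), ?_, ?_, ?_⟩
  · constructor
    · intro i
      have := b.orthonormal.1 i
      exact this
    · intro i j hij
      have := b.orthonormal.2 hij
      simpa [Submodule.coe_inner] using this
  · intro i
    have h := congrArg (Subtype.val) (hsymQ'.apply_eigenvectorBasis (rfl : Module.finrank ℂ V = N) i)
    simp only [hQ', LinearMap.codRestrict_apply, LinearMap.domRestrict_apply,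
      Submodule.coe_smul, ContinuousLinearMap.coe_coe] at h
    exact h
  · intro v
    have hvw : v - ↑(V.orthogonalProjectionOnto v) ∈ Vᗮ :=
      Submodule.sub_starProjection_mem_orthogonal (K := V) v
    set w : V := V.orthogonalProjectionOnto v with hw
    have h1 : Q v = Q ↑w := by
      have h0 : Q (v - ↑w) = 0 := hperp _ hvw
      rw [map_sub, sub_eq_zero] at h0
      exact h0
    have h2 : (w : V) = ∑ i, ⟪b i, w⟫ • b i := (b.sum_repr' w).symm
    have h3 : ∀ i, ⟪(b i : E), v⟫ = ⟪b i, w⟫ := by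
      intro i
      have h5 : ⟪(b i : E), v - ↑w⟫ = 0 :=
        (Submodule.mem_orthogonal V _).mp hvw _ (b i).2
      rw [inner_sub_right, sub_eq_zero] at h5
      rw [h5, Submodule.coe_inner]
    rw [h1]
    conv_lhs => rw [show (↑w : E) = ↑(∑ i, (⟪b i, w⟫ : ℂ) • b i) from congrArg _ h2]
    push_cast
    rw [map_sum]
    refine Finset.sum_congr rfl fun i _ => ?_
    rw [map_smul]
    have h4 : Q ↑(b i) = (μ i : ℂ) • ↑(b i) := by
      have h := congrArg (Subtype.val) (hsymQ'.apply_eigenvectorBasis (rfl : Module.finrank ℂ V = N) i)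
      simp only [hQ', LinearMap.codRestrict_apply, LinearMap.domRestrict_apply,
        Submodule.coe_smul, ContinuousLinearMap.coe_coe] at h
      exact h
    rw [h4, h3 i, smul_smul, mul_comm]

section CoreEstimate
variable {ι : Type*}
local notation "ℋ" => lp (fun _ : ι => ℂ) 2

lemma qr_core {r : ℕ} (e f : Fin r → ℋ)
    (A P : ℋ →L[ℂ] ℋ)
    (hA : ∀ v, A v = ∑ k, (⟪e k, v⟫ : ℂ) • e k)
    (hP : ∀ v, P v = ∑ k, (⟪f k, v⟫ : ℂ) • f k)
    (S : Set ι) :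
    ddx e S ≤ ddx f S + r * ‖A - P‖ := by
  classical
  set Q := A - P with hQdef
  set V := Submodule.span ℂ (Set.range e ∪ Set.range f) with hV
  haveI : FiniteDimensional ℂ V :=
    FiniteDimensional.span_of_finite ℂ ((Set.finite_range e).union (Set.finite_range f))
  have heV : ∀ k, e k ∈ V := fun k => Submodule.subset_span (Or.inl ⟨k, rfl⟩)
  have hfV : ∀ k, f k ∈ V := fun k => Submodule.subset_span (Or.inr ⟨k, rfl⟩)
  have hQapp : ∀ v, Q v = A v - P v := fun v => rfl
  have hmem : ∀ v, Q v ∈ V := by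
    intro v
    rw [hQapp, hA, hP]
    exact sub_mem (Submodule.sum_mem _ fun k _ => Submodule.smul_mem _ _ (heV k))
      (Submodule.sum_mem _ fun k _ => Submodule.smul_mem _ _ (hfV k))
  have hsymA : ∀ v w, ⟪A v, w⟫ = ⟪v, A w⟫ := by
    intro v w
    rw [hA v, hA w, sum_inner, inner_sum]
    refine Finset.sum_congr rfl fun k _ => ?_
    rw [inner_smul_left, inner_smul_right, inner_conj_symm]
    ring
  have hsymP : ∀ v w, ⟪P v, w⟫ = ⟪v, P w⟫ := by
    intro v w
    rw [hP v, hP w, sum_inner, inner_sum]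
    refine Finset.sum_congr rfl fun k _ => ?_
    rw [inner_smul_left, inner_smul_right, inner_conj_symm]
    ring
  have hsym : ∀ v w, ⟪Q v, w⟫ = ⟪v, Q w⟫ := by
    intro v w
    rw [hQapp, hQapp, inner_sub_left, inner_sub_right, hsymA, hsymP]
  obtain ⟨μ, u, hu_on, hQu, hexp⟩ := qr_finite_rank_symmetric_diag Q V hmem hsym
  set ε := ‖Q‖ with hε
  have hμle : ∀ i, |μ i| ≤ ε := by
    intro i
    have h1 : ‖Q (u i)‖ = |μ i| := by
      rw [hQu i, norm_smul, hu_on.1 i, mul_one, Complex.norm_real, Real.norm_eq_abs]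
    calc |μ i| = ‖Q (u i)‖ := h1.symm
      _ ≤ ‖Q‖ * ‖u i‖ := Q.le_opNorm _
      _ = ε := by rw [hu_on.1 i, mul_one]
  have hpoint : ∀ t : ι, (∑ k, ‖e k t‖^2) - (∑ k, ‖f k t‖^2) = ∑ i, μ i * ‖u i t‖^2 := by
    intro t
    have hAδ : (⟪lp.single 2 t (1:ℂ), A (lp.single 2 t (1:ℂ))⟫ : ℂ)
        = ((∑ k, ‖e k t‖^2 : ℝ) : ℂ) := by
      have h0 := qr_delta_inner_sum t e (fun _ => 1)
      simp only [Complex.ofReal_one, one_mul] at h0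
      rw [hA]
      simpa using h0
    have hPδ : (⟪lp.single 2 t (1:ℂ), P (lp.single 2 t (1:ℂ))⟫ : ℂ)
        = ((∑ k, ‖f k t‖^2 : ℝ) : ℂ) := by
      have h0 := qr_delta_inner_sum t f (fun _ => 1)
      simp only [Complex.ofReal_one, one_mul] at h0
      rw [hP]
      simpa using h0
    have hQδ : (⟪lp.single 2 t (1:ℂ), Q (lp.single 2 t (1:ℂ))⟫ : ℂ)
        = ((∑ i, μ i * ‖u i t‖^2 : ℝ) : ℂ) := by
      rw [hexp]; exact qr_delta_inner_sum t u μ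
    have hsub : (⟪lp.single 2 t (1:ℂ), A (lp.single 2 t (1:ℂ))⟫ : ℂ)
        - ⟪lp.single 2 t (1:ℂ), P (lp.single 2 t (1:ℂ))⟫
        = ⟪lp.single 2 t (1:ℂ), Q (lp.single 2 t (1:ℂ))⟫ := by
      rw [hQapp, inner_sub_right]
    rw [hAδ, hPδ, hQδ] at hsub
    exact_mod_cast hsub
  set c : Fin (Module.finrank ℂ V) → ℝ := fun i => ∑' t : S, ‖u i t‖^2 with hc
  have hsum_e : ddx e S = ∑' t : S, (∑ k, ‖e k (t:ι)‖^2) := by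
    unfold ddx
    exact (Summable.tsum_finsetSum (fun k _ => (qr_summable_coord_sq (e k)).subtype S)).symm
  have hsum_f : ddx f S = ∑' t : S, (∑ k, ‖f k (t:ι)‖^2) := by
    unfold ddx
    exact (Summable.tsum_finsetSum (fun k _ => (qr_summable_coord_sq (f k)).subtype S)).symm
  have hSe : Summable (fun t : S => ∑ k, ‖e k (t:ι)‖^2) :=
    summable_sum (fun k _ => (qr_summable_coord_sq (e k)).subtype S)
  have hSf : Summable (fun t : S => ∑ k, ‖f k (t:ι)‖^2) :=
    summable_sum (fun k _ => (qr_summable_coord_sq (f k)).subtype S)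
  have hSu : ∀ i, Summable (fun t : S => μ i * ‖u i (t:ι)‖^2) :=
    fun i => ((qr_summable_coord_sq (u i)).subtype S).mul_left (μ i)
  have hdiff : ddx e S - ddx f S = ∑ i, μ i * c i := by
    rw [hsum_e, hsum_f, ← Summable.tsum_sub hSe hSf]
    rw [tsum_congr (fun t : S => hpoint (t:ι)),
      Summable.tsum_finsetSum (fun i _ => hSu i)]
    exact Finset.sum_congr rfl fun i _ => tsum_mul_left
  have hcard : (Finset.univ.filter (fun i => 0 < μ i)).card ≤ r := by
    refine qr_counting_lemma μ u hu_on e f fun w => ?_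
    rw [← hexp w, hQapp, hA, hP]
  set pos := Finset.univ.filter (fun i : Fin (Module.finrank ℂ V) => 0 < μ i) with hposdef
  have hbound : ∑ i, μ i * c i ≤ r * ε := by
    have hc0 : ∀ i, 0 ≤ c i := fun i => tsum_nonneg (fun _ => sq_nonneg _)
    have hc1 : ∀ i, c i ≤ 1 := fun i => qr_tsum_sq_le_one (u i) (hu_on.1 i) S
    have hsplit := Finset.sum_filter_add_sum_filter_not Finset.univ
      (fun i : Fin (Module.finrank ℂ V) => 0 < μ i) (fun i => μ i * c i)
    have hrest : (∑ i ∈ Finset.univ.filter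
        (fun i : Fin (Module.finrank ℂ V) => ¬ 0 < μ i), μ i * c i) ≤ 0 := by
      refine Finset.sum_nonpos fun i hi => ?_
      have h1 : μ i ≤ 0 := le_of_not_gt (Finset.mem_filter.mp hi).2
      exact mul_nonpos_of_nonpos_of_nonneg h1 (hc0 i)
    have hpos_le : (∑ i ∈ pos, μ i * c i) ≤ pos.card * ε := by
      calc (∑ i ∈ pos, μ i * c i) ≤ ∑ _i ∈ pos, ε := by
            refine Finset.sum_le_sum fun i hi => ?_
            have h1 : 0 < μ i := (Finset.mem_filter.mp hi).2
            calc μ i * c i ≤ μ i * 1 := mul_le_mul_of_nonneg_left (hc1 i) h1.le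
              _ = μ i := mul_one _
              _ ≤ |μ i| := le_abs_self _
              _ ≤ ε := hμle i
        _ = pos.card * ε := by rw [Finset.sum_const, nsmul_eq_mul]
    have hcard' : (pos.card : ℝ) ≤ r := by exact_mod_cast hcard
    have hεnn : (0:ℝ) ≤ ε := norm_nonneg _
    calc ∑ i, μ i * c i
        = (∑ i ∈ pos, μ i * c i) + ∑ i ∈ Finset.univ.filter
            (fun i : Fin (Module.finrank ℂ V) => ¬ 0 < μ i), μ i * c i := by rw [hsplit]
      _ ≤ pos.card * ε + 0 := add_le_add hpos_le hrest
      _ ≤ r * ε := by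
          rw [add_zero]
          exact mul_le_mul_of_nonneg_right hcard' hεnn
  linarith [hdiff, hbound]

end CoreEstimate

/-! ### The left regular representation: basic lemmas -/

lemma lamCLM_apply (x : Γ) (v : lp (fun _ : Γ => ℂ) 2) : lamCLM x v = lam x v := rfl

lemma lamCLM_coord (x : Γ) (v : lp (fun _ : Γ => ℂ) 2) (t : Γ) :
    (lamCLM x v) t = v (x⁻¹ * t) := rfl

lemma lamCLM_norm_map (x : Γ) (v : lp (fun _ : Γ => ℂ) 2) : ‖lamCLM x v‖ = ‖v‖ :=
  (lam x).norm_map v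

lemma lamCLM_inv_comp (x : Γ) (v : lp (fun _ : Γ => ℂ) 2) :
    lamCLM x⁻¹ (lamCLM x v) = v := by
  ext t
  simp only [lamCLM_coord]
  group

lemma lamCLM_inner (x : Γ) (v w : lp (fun _ : Γ => ℂ) 2) :
    (inner ℂ (lamCLM x v) (lamCLM x w) : ℂ) = inner ℂ v w := by
  rw [lamCLM_apply, lamCLM_apply]
  exact (lam x).inner_map_map v w

lemma lamCLM_one_apply (v : lp (fun _ : Γ => ℂ) 2) : lamCLM (1:Γ) v = v := by
  ext t; simp [lamCLM_coord]

lemma ddx_smul {r : ℕ} (u : Fin r → lp (fun _ : Γ => ℂ) 2) (x : Γ) (S : Set Γ) :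
    ddx u (x • S) = ddx (fun k => lamCLM x⁻¹ (u k)) S := by
  unfold ddx
  refine Finset.sum_congr rfl fun k _ => ?_
  let e : S ≃ (x • S : Set Γ) :=
    { toFun := fun s => ⟨x * s, Set.mem_smul_set.mpr ⟨s, s.2, rfl⟩⟩
      invFun := fun t => ⟨x⁻¹ * t, by
        have := (Set.mem_smul_set_iff_inv_smul_mem (a := x) (A := S) (x := (t:Γ))).mp t.2
        simpa [smul_eq_mul] using this⟩
      left_inv := fun s => by ext; simp
      right_inv := fun t => by ext; simp }
  rw [← Equiv.tsum_eq e (fun t : (x • S : Set Γ) => ‖u k t‖^2)]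
  refine tsum_congr fun s => ?_
  have h1 : (lamCLM x⁻¹ (u k)) (s:Γ) = u k (x * s) := by
    rw [lamCLM_coord]; simp
  simp only [h1]
  show ‖u k ((x * (s:Γ) : Γ))‖^2 = _
  rfl

lemma lam_orthonormal {r : ℕ} (u : Fin r → lp (fun _ : Γ => ℂ) 2) (y : Γ)
    (hu : Orthonormal ℂ u) : Orthonormal ℂ (fun k => lamCLM y (u k)) := by
  constructor
  · intro k; rw [lamCLM_norm_map]; exact hu.1 k
  · intro i j hij
    rw [lamCLM_inner]
    exact hu.2 hij

lemma qr_conj_expansion {r : ℕ} (f : Fin r → lp (fun _ : Γ => ℂ) 2)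
    (P : lp (fun _ : Γ => ℂ) 2 →L[ℂ] lp (fun _ : Γ => ℂ) 2)
    (hP : ∀ v, P v = ∑ k, (⟪f k, v⟫ : ℂ) • f k) (x : Γ) (v : lp (fun _ : Γ => ℂ) 2) :
    (lamCLM x⁻¹ ∘L P ∘L lamCLM x) v
      = ∑ k, (⟪lamCLM x⁻¹ (f k), v⟫ : ℂ) • lamCLM x⁻¹ (f k) := by
  have h1 : (lamCLM x⁻¹ ∘L P ∘L lamCLM x) v = lamCLM x⁻¹ (P (lamCLM x v)) := rfl
  rw [h1, hP, map_sum]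
  refine Finset.sum_congr rfl fun k _ => ?_
  rw [map_smul]
  congr 1
  rw [← lamCLM_inner x⁻¹ (f k) (lamCLM x v), lamCLM_inv_comp]

lemma qr_opnorm_eq_of_norm_apply_eq {E : Type*} [NormedAddCommGroup E] [NormedSpace ℂ E]
    (T D : E →L[ℂ] E) (hTD : ∀ v, ‖T v‖ = ‖D v‖) : ‖T‖ = ‖D‖ := by
  refine le_antisymm ?_ ?_
  · refine T.opNorm_le_bound (norm_nonneg D) fun v => ?_
    rw [hTD v]; exact D.le_opNorm v
  · refine D.opNorm_le_bound (norm_nonneg T) fun v => ?_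
    rw [← hTD v]; exact T.le_opNorm v

lemma qr_conj_norm_eq (P : lp (fun _ : Γ => ℂ) 2 →L[ℂ] lp (fun _ : Γ => ℂ) 2) (x : Γ) :
    ‖(lamCLM x⁻¹ ∘L P ∘L lamCLM x) - P‖ = ‖lamCLM x ∘L P - P ∘L lamCLM x‖ := by
  refine qr_opnorm_eq_of_norm_apply_eq _ _ fun v => ?_
  have h1 : ((lamCLM x⁻¹ ∘L P ∘L lamCLM x) - P) v
      = lamCLM x⁻¹ ((P ∘L lamCLM x - lamCLM x ∘L P) v) := by
    simp only [ContinuousLinearMap.sub_apply, ContinuousLinearMap.comp_apply, map_sub]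
    rw [lamCLM_inv_comp]
  rw [h1, lamCLM_norm_map]
  have h2 : (P ∘L lamCLM x - lamCLM x ∘L P) v = -((lamCLM x ∘L P - P ∘L lamCLM x) v) := by
    simp [ContinuousLinearMap.sub_apply]
  rw [h2, norm_neg]

lemma qr_lam_one_comm (P : lp (fun _ : Γ => ℂ) 2 →L[ℂ] lp (fun _ : Γ => ℂ) 2) :
    ‖lamCLM (1:Γ) ∘L P - P ∘L lamCLM (1:Γ)‖ = 0 := by
  have h0 : lamCLM (1:Γ) ∘L P - P ∘L lamCLM (1:Γ) = 0 := by
    ext1 v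
    simp [ContinuousLinearMap.sub_apply, lamCLM_one_apply]
  rw [h0, norm_zero]

set_option maxHeartbeats 2000000 in
lemma qr_proj_expansion (P : lp (fun _ : Γ => ℂ) 2 →L[ℂ] lp (fun _ : Γ => ℂ) 2)
    (hidem : IsIdempotentElem P) (hsa : IsSelfAdjoint P)
    [FiniteDimensional ℂ (LinearMap.range (P : lp (fun _ : Γ => ℂ) 2 →ₗ[ℂ] lp (fun _ : Γ => ℂ) 2))] :
    ∃ f : Fin (Module.finrank ℂ (LinearMap.range (P : lp (fun _ : Γ => ℂ) 2 →ₗ[ℂ] lp (fun _ : Γ => ℂ) 2))) → lp (fun _ : Γ => ℂ) 2,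
      Orthonormal ℂ f ∧ ∀ v, P v = ∑ k, (⟪f k, v⟫ : ℂ) • f k := by
  have hsym : ∀ v w, (⟪P v, w⟫ : ℂ) = ⟪v, P w⟫ := by
    intro v w
    conv_lhs => rw [← hsa]
    rw [ContinuousLinearMap.star_eq_adjoint, ContinuousLinearMap.adjoint_inner_left]
  have hfix : ∀ w : lp (fun _ : Γ => ℂ) 2, w ∈ LinearMap.range (P : lp (fun _ : Γ => ℂ) 2 →ₗ[ℂ] lp (fun _ : Γ => ℂ) 2) → P w = w := by
    rintro w ⟨z, rfl⟩
    have := congrArg (fun T => T z) hidem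
    simpa [ContinuousLinearMap.mul_apply] using this
  set K := LinearMap.range (P : lp (fun _ : Γ => ℂ) 2 →ₗ[ℂ] lp (fun _ : Γ => ℂ) 2) with hK
  have b := stdOrthonormalBasis ℂ K
  refine ⟨fun k => ((b k : K) : lp (fun _ : Γ => ℂ) 2), ?_, ?_⟩
  · constructor
    · intro k
      have := b.orthonormal.1 k
      exact this
    · intro i j hij
      have := b.orthonormal.2 hij
      simpa [Submodule.coe_inner] using this
  · intro v
    have hmem : P v ∈ K := LinearMap.mem_range_self _ v
    set w : K := ⟨P v, hmem⟩ with hw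
    have h2 : (w : K) = ∑ k, ⟪b k, w⟫ • b k := (b.sum_repr' w).symm
    have h3 : ∀ k, (⟪b k, w⟫ : ℂ) = ⟪((b k : K) : lp (fun _ : Γ => ℂ) 2), v⟫ := by
      intro k
      rw [Submodule.coe_inner]
      show (⟪((b k : K) : lp (fun _ : Γ => ℂ) 2), P v⟫ : ℂ) = _
      rw [show (⟪((b k : K) : lp (fun _ : Γ => ℂ) 2), P v⟫ : ℂ)
        = ⟪P ((b k : K) : lp (fun _ : Γ => ℂ) 2), v⟫ from (hsym _ v).symm,
        hfix _ (b k).2]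
    have h5 := congrArg (Subtype.val) h2
    push_cast at h5
    exact h5.trans (Finset.sum_congr rfl fun k _ => by rw [h3 k])

lemma qr_rank_pos (P : lp (fun _ : Γ => ℂ) 2 →L[ℂ] lp (fun _ : Γ => ℂ) 2)
    [FiniteDimensional ℂ (LinearMap.range (P : lp (fun _ : Γ => ℂ) 2 →ₗ[ℂ] lp (fun _ : Γ => ℂ) 2))] (hPne : P ≠ 0) :
    0 < Module.finrank ℂ (LinearMap.range (P : lp (fun _ : Γ => ℂ) 2 →ₗ[ℂ] lp (fun _ : Γ => ℂ) 2)) := by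
  obtain ⟨v, hv⟩ : ∃ v, P v ≠ 0 := by
    by_contra hc
    push_neg at hc
    exact hPne (ContinuousLinearMap.ext fun v => by simp [hc v])
  haveI : Nontrivial (LinearMap.range (P : lp (fun _ : Γ => ℂ) 2 →ₗ[ℂ] lp (fun _ : Γ => ℂ) 2)) :=
    ⟨⟨P v, LinearMap.mem_range_self _ v⟩, 0, by simpa [Submodule.mk_eq_zero] using hv⟩
  exact Module.finrank_pos

/-- quantitative Rosenberg. Suppose the group `Γ` has a paradoxical
decomposition `Γ = ⊔ᵢ gᵢXᵢ = ⊔ⱼ hⱼYⱼ = (⊔ᵢ Xᵢ) ⊔ (⊔ⱼ Yⱼ)` with `g 0 = h 0 = 1`.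
Then for every nonzero finite-rank orthogonal projection `P` on `ℓ²(Γ)` there is
`x ∈ {g₁,…,gₙ,h₁,…,h_m}` with `‖[λ_x, P]‖ ≥ 1/(n+m−2)`. -/
theorem quantitative_rosenberg
    {Γ : Type} [Group Γ] {n m : ℕ} (hn : 2 ≤ n) (hm : 2 ≤ m)
    (X : Fin n → Set Γ) (Y : Fin m → Set Γ) (g : Fin n → Γ) (h : Fin m → Γ)
    (hg1 : g ⟨0, by omega⟩ = 1) (hh1 : h ⟨0, by omega⟩ = 1)
    (hdisj : Pairwise (Function.onFun Disjoint (Sum.elim X Y)))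
    (hcov1 : (⋃ i, g i • X i) = Set.univ)
    (hdisj1 : Pairwise (Function.onFun Disjoint fun i => g i • X i))
    (hcov2 : (⋃ j, h j • Y j) = Set.univ)
    (hdisj2 : Pairwise (Function.onFun Disjoint fun j => h j • Y j))
    (hcov3 : (⋃ i, X i) ∪ (⋃ j, Y j) = Set.univ)
    (P : lp (fun _ : Γ => ℂ) 2 →L[ℂ] lp (fun _ : Γ => ℂ) 2)
    (hPidem : IsIdempotentElem P) (hPsa : IsSelfAdjoint P)
    (hPfr : FiniteDimensional ℂ (LinearMap.range (P : lp (fun _ : Γ => ℂ) 2 →ₗ[ℂ] lp (fun _ : Γ => ℂ) 2))) (hPne : P ≠ 0) :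
    ∃ x ∈ Set.range g ∪ Set.range h,
      1 / ((n : ℝ) + m - 2) ≤ ‖lamCLM x ∘L P - P ∘L lamCLM x‖ := by
  classical
  by_contra hcon
  push_neg at hcon
  set r := Module.finrank ℂ (LinearMap.range (P : lp (fun _ : Γ => ℂ) 2 →ₗ[ℂ] lp (fun _ : Γ => ℂ) 2)) with hrdef
  obtain ⟨f, hf_on, hfP⟩ := qr_proj_expansion P hPidem hPsa
  have hrpos : 0 < r := qr_rank_pos P hPne
  have hrR : (0:ℝ) < r := by exact_mod_cast hrpos
  have hnm : (0:ℝ) < (n:ℝ) + m - 2 := by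
    have h1 : (2:ℝ) ≤ (n:ℝ) := by exact_mod_cast hn
    have h2 : (2:ℝ) ≤ (m:ℝ) := by exact_mod_cast hm
    linarith
  set c : ℝ := 1 / ((n:ℝ) + m - 2) with hcdef
  have hcpos : 0 < c := by positivity
  have key : ∀ (x : Γ) (S : Set Γ),
      ddx f (x • S) ≤ ddx f S + r * ‖lamCLM x ∘L P - P ∘L lamCLM x‖ := by
    intro x S
    have h2 := qr_core (fun k => lamCLM x⁻¹ (f k)) f (lamCLM x⁻¹ ∘L P ∘L lamCLM x) P
      (qr_conj_expansion f P hfP x) hfP S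
    rw [qr_conj_norm_eq P x] at h2
    rw [ddx_smul f x S]
    exact h2
  have fam : ∀ (N : ℕ) (hN : 2 ≤ N) (Z : Fin N → Set Γ) (z : Fin N → Γ),
      z ⟨0, by omega⟩ = 1 →
      (⋃ i, z i • Z i) = Set.univ →
      Pairwise (Function.onFun Disjoint fun i => z i • Z i) →
      (∀ i, ‖lamCLM (z i) ∘L P - P ∘L lamCLM (z i)‖ < c) →
      (r:ℝ) < (∑ i, ddx f (Z i)) + r * (((N:ℝ) - 1) * c) := by
    intro N hN Z z hz1 hzcov hzdisj hzlt
    have h0 : ddx f Set.univ = r := ddx_univ f hf_on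
    have h1 : (r:ℝ) = ∑ i, ddx f (z i • Z i) := by
      rw [← ddx_iUnion f _ hzdisj, hzcov, h0]
    have h2 : (r:ℝ) ≤ (∑ i, ddx f (Z i))
        + r * (∑ i, ‖lamCLM (z i) ∘L P - P ∘L lamCLM (z i)‖) := by
      calc (r:ℝ) = ∑ i, ddx f (z i • Z i) := h1
        _ ≤ ∑ i, (ddx f (Z i) + r * ‖lamCLM (z i) ∘L P - P ∘L lamCLM (z i)‖) :=
            Finset.sum_le_sum fun i _ => key (z i) (Z i)
        _ = _ := by rw [Finset.sum_add_distrib, ← Finset.mul_sum]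
    have h3 : (∑ i, ‖lamCLM (z i) ∘L P - P ∘L lamCLM (z i)‖) < ((N:ℝ) - 1) * c := by
      set i0 : Fin N := ⟨0, by omega⟩ with hi0
      have h4 : ‖lamCLM (z i0) ∘L P - P ∘L lamCLM (z i0)‖ = 0 := by
        rw [hz1]; exact qr_lam_one_comm P
      rw [← Finset.sum_erase_add Finset.univ _ (Finset.mem_univ i0), h4, add_zero]
      have hne : ((Finset.univ : Finset (Fin N)).erase i0).Nonempty := by
        refine ⟨⟨1, by omega⟩, Finset.mem_erase.mpr ⟨?_, Finset.mem_univ _⟩⟩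
        simp [hi0, Fin.ext_iff]
      calc ∑ i ∈ Finset.univ.erase i0, ‖lamCLM (z i) ∘L P - P ∘L lamCLM (z i)‖
          < ∑ _i ∈ Finset.univ.erase i0, c :=
            Finset.sum_lt_sum_of_nonempty hne fun i _ => hzlt i
        _ = (((Finset.univ.erase i0).card : ℝ)) * c := by
            rw [Finset.sum_const, nsmul_eq_mul]
        _ = ((N:ℝ) - 1) * c := by
            rw [Finset.card_erase_of_mem (Finset.mem_univ _), Finset.card_univ, Fintype.card_fin]
            congr 1
            have hN1 : (1:ℕ) ≤ N := by omega
            push_cast [Nat.cast_sub hN1]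
            ring
    calc (r:ℝ) ≤ (∑ i, ddx f (Z i))
        + r * (∑ i, ‖lamCLM (z i) ∘L P - P ∘L lamCLM (z i)‖) := h2
      _ < (∑ i, ddx f (Z i)) + r * (((N:ℝ) - 1) * c) := by
          exact (add_lt_add_iff_left _).mpr (mul_lt_mul_of_pos_left h3 hrR)
  have hglt : ∀ i : Fin n, ‖lamCLM (g i) ∘L P - P ∘L lamCLM (g i)‖ < c :=
    fun i => hcon (g i) (Or.inl ⟨i, rfl⟩)
  have hhlt : ∀ j : Fin m, ‖lamCLM (h j) ∘L P - P ∘L lamCLM (h j)‖ < c :=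
    fun j => hcon (h j) (Or.inr ⟨j, rfl⟩)
  have hX := fam n hn X g hg1 hcov1 hdisj1 hglt
  have hY := fam m hm Y h hh1 hcov2 hdisj2 hhlt
  have hdisjX : Pairwise (Function.onFun Disjoint X) := fun i j hij =>
    hdisj (show (Sum.inl i : Fin n ⊕ Fin m) ≠ Sum.inl j from fun hc => hij (Sum.inl.inj hc))
  have hdisjY : Pairwise (Function.onFun Disjoint Y) := fun i j hij =>
    hdisj (show (Sum.inr i : Fin n ⊕ Fin m) ≠ Sum.inr j from fun hc => hij (Sum.inr.inj hc))
  have hdisjXY : Disjoint (⋃ i, X i) (⋃ j, Y j) :=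
    Set.disjoint_iUnion_left.mpr fun i => Set.disjoint_iUnion_right.mpr fun j =>
      hdisj (show (Sum.inl i : Fin n ⊕ Fin m) ≠ Sum.inr j from fun hc => by cases hc)
  have htot : (∑ i, ddx f (X i)) + (∑ j, ddx f (Y j)) = r := by
    rw [← ddx_iUnion f X hdisjX, ← ddx_iUnion f Y hdisjY, ← ddx_union f hdisjXY, hcov3,
      ddx_univ f hf_on]
  have hc1 : ((n:ℝ) - 1) * c + ((m:ℝ) - 1) * c = 1 := by
    rw [hcdef]
    field_simp
    ring
  have hmul : (r:ℝ) * (((n:ℝ) - 1) * c) + r * (((m:ℝ) - 1) * c) = r := by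
    rw [← mul_add, hc1, mul_one]
  linarith [hX, hY, htot, hmul]
end

section
/- A countable discrete group Γ is LEF (locally embeddable into finite groups) if and only if there exists a sequence of finite groups (H_k) and an injective group homomorphism from Γ into the quotient group (∏_k H_k)/(⊕_k H_k). -/
/-- A group `Γ` is *LEF* (locally embeddable into finite groups) if for every finite
subset `F ⊆ Γ` there are a finite group `H` and a map `φ : Γ → H` that is injective on
`F` and multiplicative on `F` (i.e. `φ(st) = φ(s)φ(t)` whenever `s, t, st ∈ F`). -/
def IsLEF (Γ : Type*) [Group Γ] : Prop :=
  ∀ F : Finset Γ, ∃ (H : Type) (_ : Group H) (_ : Finite H) (φ : Γ → H),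
    Set.InjOn φ F ∧ ∀ s ∈ F, ∀ t ∈ F, s * t ∈ (F : Set Γ) → φ (s * t) = φ s * φ t

/-- The direct product `∏ₖ H k` of a sequence of groups, with the group instance
supplied explicitly. -/
def DirectProd (H : ℕ → Type*) (inst : ∀ k, Group (H k)) : Type _ := ∀ k, H k

instance (H : ℕ → Type*) (inst : ∀ k, Group (H k)) : Group (DirectProd H inst) :=
  letI := inst; (inferInstance : Group (∀ k, H k))

/-- The normal subgroup `⊕ₖ H k` of `∏ₖ H k` consisting of the sequences that are
eventually equal to the identity. -/
def directSum (H : ℕ → Type*) (inst : ∀ k, Group (H k)) : Subgroup (DirectProd H inst) :=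
  letI := inst
  { carrier := {f : ∀ k, H k | ∀ᶠ k in Filter.atTop, f k = 1}
    one_mem' := Filter.Eventually.of_forall fun _ => rfl
    mul_mem' := fun {f g} hf hg => by
      filter_upwards [hf, hg] with k hk hk'
      show f k * g k = 1
      rw [hk, hk', one_mul]
    inv_mem' := fun {f} hf => by
      filter_upwards [hf] with k hk
      show (f k)⁻¹ = 1
      rw [hk, inv_one] }

instance (H : ℕ → Type*) (inst : ∀ k, Group (H k)) : (directSum H inst).Normal := by
  letI := inst
  constructor
  intro f hf g
  filter_upwards [hf] with k hk
  show g k * f k * (g k)⁻¹ = 1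
  rw [hk, mul_one, mul_inv_cancel]

/-- The quotient group `(∏ₖ H k) / (⊕ₖ H k)`. -/
def ProdModSum (H : ℕ → Type*) (inst : ∀ k, Group (H k)) : Type _ :=
  DirectProd H inst ⧸ directSum H inst

instance (H : ℕ → Type*) (inst : ∀ k, Group (H k)) : Group (ProdModSum H inst) :=
  QuotientGroup.Quotient.group _

lemma mem_directSum {H : ℕ → Type*} {inst : ∀ k, Group (H k)} {x : DirectProd H inst} :
    x ∈ directSum H inst ↔ ∀ᶠ k in Filter.atTop, x k = 1 := Iff.rfl

/-- A countable discrete group `Γ` is LEF if and only if there are a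
sequence of finite groups `(H k)` and an injective group homomorphism from `Γ` into the
quotient `(∏ₖ H k)/(⊕ₖ H k)`. -/
theorem isLEF_iff_embeds_prodModSum (Γ : Type) [Group Γ] [Countable Γ] :
    IsLEF Γ ↔
      ∃ (H : ℕ → Type) (inst : ∀ k, Group (H k)) (_ : ∀ k, Finite (H k))
        (Φ : Γ →* ProdModSum H inst), Function.Injective Φ := by
  classical
  constructor
  · -- LEF → embedding
    intro hΓ
    obtain ⟨e, he⟩ := exists_injective_nat Γ
    set F : ℕ → Finset Γ := fun k => (Finset.range (k+1)).preimage e he.injOn with hF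
    have hmem : ∀ g k, e g ≤ k → g ∈ F k := by
      intro g k h
      simp [hF, Finset.mem_preimage, Nat.lt_succ_iff, h]
    choose H instH finH φ hinj hmul using fun k => hΓ (F k)
    have hone : ∀ k, e (1 : Γ) ≤ k → φ k 1 = 1 := by
      intro k hk
      have h1 : (1 : Γ) ∈ F k := hmem 1 k hk
      have := hmul k 1 h1 1 h1 (by simpa using h1)
      rw [one_mul] at this
      exact (left_eq_mul.mp this)
    refine ⟨H, instH, finH,
      MonoidHom.mk' (fun g => (QuotientGroup.mk (fun k => φ k g) : ProdModSum H instH)) ?_, ?_⟩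
    · intro a b
      show (QuotientGroup.mk (fun k => φ k (a * b)) : ProdModSum H instH) =
          QuotientGroup.mk ((fun k => φ k a) * (fun k => φ k b))
      refine (QuotientGroup.eq).mpr ?_
      rw [mem_directSum]
      filter_upwards [Filter.eventually_ge_atTop (e a), Filter.eventually_ge_atTop (e b),
        Filter.eventually_ge_atTop (e (a * b))] with k ha hb hab
      show (φ k (a * b))⁻¹ * (φ k a * φ k b) = 1
      rw [← hmul k a (hmem a k ha) b (hmem b k hb) (by simpa using hmem (a*b) k hab),
        inv_mul_cancel]
    · haveI : (directSum H instH).Normal := inferInstance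
      rw [injective_iff_map_eq_one]
      intro g hg
      have h1 : (fun k => φ k g) ∈ directSum H instH :=
        (QuotientGroup.eq_one_iff (G := DirectProd H instH) _).mp hg
      replace h1 := mem_directSum.mp h1
      obtain ⟨k, hk1, hk2, hk3⟩ :=
        (h1.and ((Filter.eventually_ge_atTop (e g)).and
          (Filter.eventually_ge_atTop (e (1 : Γ))))).exists
      exact hinj k (by simpa using hmem g k hk2) (by simpa using hmem 1 k hk3)
        (hk1.trans (hone k hk3).symm)
  · -- embedding → LEF
    rintro ⟨H, inst, finH, Φ, hΦ⟩
    intro F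
    letI := inst
    haveI := finH
    set f : Γ → DirectProd H inst := fun g => Quotient.out (Φ g) with hf
    have hmk : ∀ g, (QuotientGroup.mk (f g) : ProdModSum H inst) = Φ g :=
      fun g => Quotient.out_eq _
    -- multiplicativity eventually, for each relevant pair
    have hmulE : ∀ s ∈ F, ∀ t ∈ F, s * t ∈ F →
        ∀ᶠ k in Filter.atTop, f (s * t) k = f s k * f t k := by
      intro s hs t ht hst
      have h1 : (QuotientGroup.mk (f (s * t)) : ProdModSum H inst) =
          QuotientGroup.mk (f s * f t) := by
        rw [QuotientGroup.mk_mul, hmk, hmk, hmk, map_mul]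
        rfl
      have h2 : (f (s * t))⁻¹ * (f s * f t) ∈ directSum H inst := (QuotientGroup.eq).mp h1
      rw [mem_directSum] at h2
      filter_upwards [h2] with k hk
      exact inv_mul_eq_one.mp hk
    -- separation: distinct elements differ frequently
    have hne : ∀ s ∈ F, ∀ t ∈ F, s ≠ t → ∃ᶠ k in Filter.atTop, f s k ≠ f t k := by
      intro s _ t _ hst
      have h1 : (QuotientGroup.mk (f s) : ProdModSum H inst) ≠ QuotientGroup.mk (f t) := by
        rw [hmk, hmk]; exact fun h => hst (hΦ h)
      have h2 : ¬ ((f s)⁻¹ * f t ∈ directSum H inst) := fun h => h1 ((QuotientGroup.eq).mpr h)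
      rw [mem_directSum, Filter.not_eventually] at h2
      refine h2.mono fun k hk h => hk ?_
      show (f s k)⁻¹ * f t k = 1
      rw [h, inv_mul_cancel]
    -- a single threshold N for all multiplicative relations
    have hEall : ∀ᶠ k in Filter.atTop, ∀ p ∈ (F ×ˢ F : Finset (Γ × Γ)),
        p.1 * p.2 ∈ F → f (p.1 * p.2) k = f p.1 k * f p.2 k := by
      rw [Filter.eventually_all_finset]
      intro p hp
      by_cases h : p.1 * p.2 ∈ F
      · obtain ⟨hp1, hp2⟩ := Finset.mem_product.mp hp
        filter_upwards [hmulE p.1 hp1 p.2 hp2 h] with k hk _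
        exact hk
      · exact Filter.Eventually.of_forall fun k hk => absurd hk h
    obtain ⟨N, hN⟩ := Filter.eventually_atTop.mp hEall
    -- pick separating indices ≥ N for each pair
    have hkey : ∀ p : Γ × Γ, ∃ k, N ≤ k ∧
        (p.1 ∈ F → p.2 ∈ F → p.1 ≠ p.2 → f p.1 k ≠ f p.2 k) := by
      intro p
      by_cases h : p.1 ∈ F ∧ p.2 ∈ F ∧ p.1 ≠ p.2
      · obtain ⟨k, hk1, hk2⟩ :=
          Filter.frequently_atTop.mp (hne p.1 h.1 p.2 h.2.1 h.2.2) N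
        exact ⟨k, hk1, fun _ _ _ => hk2⟩
      · exact ⟨N, le_rfl, fun h1 h2 h3 => absurd ⟨h1, h2, h3⟩ h⟩
    choose K hK1 hK2 using hkey
    set M := (F ×ˢ F).sup K with hM
    refine ⟨(∀ j : (Finset.Icc N M : Finset ℕ), H j.1), inferInstance, inferInstance,
      fun g j => f g j.1, ?_, ?_⟩
    · -- injective on F
      intro s hs t ht heq
      by_contra hst
      have hsF : s ∈ F := hs
      have htF : t ∈ F := ht
      have hmemIcc : K (s, t) ∈ Finset.Icc N M :=
        Finset.mem_Icc.mpr ⟨hK1 (s, t), Finset.le_sup (Finset.mem_product.mpr ⟨hsF, htF⟩)⟩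
      have := congrFun heq ⟨K (s, t), hmemIcc⟩
      exact hK2 (s, t) hsF htF hst this
    · -- multiplicative on F
      intro s hs t ht hst
      funext j
      have hj := Finset.mem_Icc.mp j.2
      exact hN j.1 hj.1 (s, t) (Finset.mem_product.mpr ⟨hs, ht⟩) (by simpa using hst)
end

section
/- Every countable discrete LEF group Γ is MF; that is, Γ embeds into the unitary group of the C*-algebra (∏_k M_{n_k}(ℂ))/(⊕_k M_{n_k}(ℂ)) for some sequence of positive integers (n_k). In fact, one can construct a group homomorphism π: Γ → U(Q) with ‖π(s) − π(t)‖ ≥ √2 for all distinct s, t ∈ Γ. -/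
open Filter Pointwise

/-- Every countable discrete LEF group `Γ` is MF: there are a sequence
of positive integers `(n k)` and unitaries `σ k s` on `ℂ^{n k}` implementing a group
homomorphism `π : Γ → U(∏ₖ M_{n k}(ℂ)/⊕ₖ M_{n k}(ℂ))` — i.e. `σ` is multiplicative and
unital modulo sequences tending to `0` in norm — such that, in the quotient norm
(`‖(a_k) + ⊕‖ = limsup ‖a_k‖`), `‖π(s) − π(t)‖ ≥ √2` for all distinct `s, t ∈ Γ`. -/
theorem isLEF_implies_MF (Γ : Type) [Group Γ] [Countable Γ] (hLEF : IsLEF Γ) :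
    ∃ n : ℕ → ℕ, (∀ k, 0 < n k) ∧
      ∃ σ : ∀ k : ℕ, Γ → (EuclideanSpace ℂ (Fin (n k)) →L[ℂ] EuclideanSpace ℂ (Fin (n k))),
        (∀ k s, σ k s ∈ unitary (EuclideanSpace ℂ (Fin (n k)) →L[ℂ] EuclideanSpace ℂ (Fin (n k)))) ∧
        Tendsto (fun k => ‖σ k 1 - 1‖) atTop (nhds 0) ∧
        (∀ s t : Γ, Tendsto (fun k => ‖σ k (s * t) - σ k s ∘L σ k t‖) atTop (nhds 0)) ∧
        (∀ s t : Γ, s ≠ t →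
          Real.sqrt 2 ≤ limsup (fun k => ‖σ k s - σ k t‖) atTop) := by
  classical
  obtain ⟨e, he⟩ := exists_surjective_nat Γ
  let G : ℕ → Finset Γ := fun k => (Finset.range (k + 1)).image e
  let F : ℕ → Finset Γ := fun k => G k ∪ G k * G k
  choose H instH instF φ hinj hmul using fun k => hLEF (F k)
  letI : ∀ k, Group (H k) := instH
  letI : ∀ k, Finite (H k) := instF
  haveI : ∀ k, Fintype (H k) := fun k => Fintype.ofFinite _
  haveI : ∀ k, Nonempty (H k) := fun k => ⟨1⟩
  have hmemG : ∀ s : Γ, ∀ᶠ k in atTop, s ∈ G k := by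
    intro s
    obtain ⟨i, hi⟩ := he s
    filter_upwards [eventually_ge_atTop i] with k hk
    exact Finset.mem_image.mpr ⟨i, Finset.mem_range.mpr (Nat.lt_succ_of_le hk), hi⟩
  have hGF : ∀ k, G k ⊆ F k := fun k => Finset.subset_union_left
  have hφmul : ∀ s t : Γ, ∀ᶠ k in atTop, φ k (s * t) = φ k s * φ k t := by
    intro s t
    filter_upwards [hmemG s, hmemG t] with k hs ht
    exact hmul k s (hGF k hs) t (hGF k ht)
      (Finset.mem_coe.mpr (Finset.mem_union_right _ (Finset.mul_mem_mul hs ht)))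
  have hφone : ∀ᶠ k in atTop, φ k 1 = 1 := by
    filter_upwards [hφmul 1 1] with k hk
    have h1 : φ k 1 * 1 = φ k 1 * φ k 1 := by rw [mul_one, ← hk, one_mul]
    exact (mul_left_cancel h1).symm
  have hφinj : ∀ s t : Γ, s ≠ t → ∀ᶠ k in atTop, φ k s ≠ φ k t := by
    intro s t hst
    filter_upwards [hmemG s, hmemG t] with k hs ht h
    exact hst (hinj k (Finset.mem_coe.mpr (hGF k hs)) (Finset.mem_coe.mpr (hGF k ht)) h)
  let n : ℕ → ℕ := fun k => Fintype.card (H k)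
  let eqv : ∀ k, H k ≃ Fin (n k) := fun k => Fintype.equivFin (H k)
  let perm : ∀ k, H k → (Fin (n k) ≃ Fin (n k)) := fun k g =>
    ((eqv k).symm.trans (Equiv.mulLeft g)).trans (eqv k)
  let V : ∀ k, H k → (EuclideanSpace ℂ (Fin (n k)) ≃ₗᵢ[ℂ] EuclideanSpace ℂ (Fin (n k))) :=
    fun k g => LinearIsometryEquiv.piLpCongrLeft 2 ℂ ℂ (perm k g)
  have hVapp : ∀ k g (x : EuclideanSpace ℂ (Fin (n k))) i,
      (V k g : EuclideanSpace ℂ (Fin (n k)) →L[ℂ] EuclideanSpace ℂ (Fin (n k))) x i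
        = x ((perm k g).symm i) := fun k g x i => rfl
  have hVnorm : ∀ k g,
      ‖(V k g : EuclideanSpace ℂ (Fin (n k)) →L[ℂ] EuclideanSpace ℂ (Fin (n k)))‖ ≤ 1 := by
    intro k g
    refine ContinuousLinearMap.opNorm_le_bound _ zero_le_one fun x => ?_
    rw [one_mul]
    exact le_of_eq ((V k g).norm_map x)
  refine ⟨n, fun k => Fintype.card_pos,
    fun k s => (V k (φ k s) : EuclideanSpace ℂ (Fin (n k)) →L[ℂ] EuclideanSpace ℂ (Fin (n k))),
    ?_, ?_, ?_, ?_⟩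
  · intro k s
    exact (Unitary.linearIsometryEquiv.symm (V k (φ k s))).2
  · refine tendsto_const_nhds.congr' ?_
    filter_upwards [hφone] with k hk
    have hV1 : (V k (φ k 1) : EuclideanSpace ℂ (Fin (n k)) →L[ℂ] EuclideanSpace ℂ (Fin (n k)))
        = 1 := by
      rw [hk]
      ext x i
      rw [hVapp]
      show x ((perm k 1).symm i) = x i
      refine congrArg (WithLp.ofLp x) ?_
      simp only [perm, Equiv.symm_trans_apply, Equiv.symm_symm, Equiv.mulLeft_symm,
        Equiv.coe_mulLeft]
      rw [inv_one, one_mul, Equiv.apply_symm_apply]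
    rw [hV1, sub_self, norm_zero]
  · intro s t
    refine tendsto_const_nhds.congr' ?_
    filter_upwards [hφmul s t] with k hk
    have hVm : (V k (φ k (s * t)) :
          EuclideanSpace ℂ (Fin (n k)) →L[ℂ] EuclideanSpace ℂ (Fin (n k)))
        = (V k (φ k s) : EuclideanSpace ℂ (Fin (n k)) →L[ℂ] EuclideanSpace ℂ (Fin (n k))) ∘L
          (V k (φ k t) : EuclideanSpace ℂ (Fin (n k)) →L[ℂ] EuclideanSpace ℂ (Fin (n k))) := by
      rw [hk]
      ext x i
      rw [ContinuousLinearMap.comp_apply, hVapp, hVapp, hVapp]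
      refine congrArg (WithLp.ofLp x) ?_
      simp only [perm, Equiv.symm_trans_apply, Equiv.symm_symm, Equiv.mulLeft_symm,
        Equiv.coe_mulLeft]
      rw [Equiv.symm_apply_apply, mul_inv_rev, mul_assoc]
    rw [hVm, sub_self, norm_zero]
  · intro s t hst
    have hbdd : IsBoundedUnder (· ≤ ·) atTop (fun k =>
        ‖(V k (φ k s) : EuclideanSpace ℂ (Fin (n k)) →L[ℂ] EuclideanSpace ℂ (Fin (n k))) -
          (V k (φ k t) : EuclideanSpace ℂ (Fin (n k)) →L[ℂ] EuclideanSpace ℂ (Fin (n k)))‖) := by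
      refine isBoundedUnder_of ⟨2, fun k => ?_⟩
      refine (norm_sub_le _ _).trans ?_
      have h1 := hVnorm k (φ k s)
      have h2 := hVnorm k (φ k t)
      linarith
    refine le_limsup_of_frequently_le ?_ hbdd
    refine Eventually.frequently ?_
    filter_upwards [hφinj s t hst] with k hk
    set g := φ k s
    set h := φ k t
    set j := eqv k 1
    have hVsingle : ∀ g' : H k, ∀ c : ℂ,
        (V k g' : EuclideanSpace ℂ (Fin (n k)) →L[ℂ] EuclideanSpace ℂ (Fin (n k)))
          (EuclideanSpace.single j c) = EuclideanSpace.single (perm k g' j) c := by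
      intro g' c
      exact LinearIsometryEquiv.piLpCongrLeft_single (perm k g') j c
    have hpj : ∀ g' : H k, perm k g' j = eqv k g' := by
      intro g'
      simp [perm, j, Equiv.trans_apply, Equiv.coe_mulLeft, Equiv.symm_apply_apply, mul_one]
    have hab : perm k g j ≠ perm k h j := by
      rw [hpj, hpj]
      exact fun hc => hk ((eqv k).injective hc)
    set a := perm k g j
    set b := perm k h j
    have hinner : (inner ℂ (EuclideanSpace.single a (1 : ℂ)) (EuclideanSpace.single b (1 : ℂ)) : ℂ)
        = 0 := by
      rw [EuclideanSpace.inner_single_left]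
      simp [EuclideanSpace.single_apply, hab]
    have hw2 : ‖EuclideanSpace.single a (1 : ℂ) - EuclideanSpace.single b (1 : ℂ)‖ ^ 2 = 2 := by
      rw [@norm_sub_sq ℂ]
      rw [hinner]
      simp [EuclideanSpace.norm_single]
      norm_num
    have hwnorm : ‖EuclideanSpace.single a (1 : ℂ) - EuclideanSpace.single b (1 : ℂ)‖
        = Real.sqrt 2 := by
      rw [← hw2, Real.sqrt_sq (norm_nonneg _)]
    have happly :
        ((V k g : EuclideanSpace ℂ (Fin (n k)) →L[ℂ] EuclideanSpace ℂ (Fin (n k))) -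
          (V k h : EuclideanSpace ℂ (Fin (n k)) →L[ℂ] EuclideanSpace ℂ (Fin (n k))))
            (EuclideanSpace.single j 1)
        = EuclideanSpace.single a (1 : ℂ) - EuclideanSpace.single b (1 : ℂ) := by
      rw [ContinuousLinearMap.sub_apply, hVsingle, hVsingle]
    calc Real.sqrt 2
        = ‖((V k g : EuclideanSpace ℂ (Fin (n k)) →L[ℂ] EuclideanSpace ℂ (Fin (n k))) -
            (V k h : EuclideanSpace ℂ (Fin (n k)) →L[ℂ] EuclideanSpace ℂ (Fin (n k))))
              (EuclideanSpace.single j 1)‖ := by rw [happly, hwnorm]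
      _ ≤ _ := ContinuousLinearMap.unit_le_opNorm _ _
          (by rw [EuclideanSpace.norm_single]; simp)
end
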